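/- If M_X is even and every vector of X together with H̃(n,m) forms an m-distance set, then the set Y obtained by appending i copies of the all-ones block (1ⁿ) to each vector of X satisfies M_Y = M_X + i(n−1); if moreover i is even when n is even (i arbitrary when n is odd), then M_Y is an even integer at most 2(m + in). -/

import Mathlib

/-- Appending `i·n` all-ones blocks (parameters `t_j = 1`, `k₀⁽ʲ⁾ = 1`,
`k₁⁽ʲ⁾ = n`) to the parameter set `X` yields `Y` with
`M_Y = M_X + i(n-1)`; if moreover `M_X` is an even positive integer at most
`2m`, and `i` is even whenever `n` is even, then `M_Y` is even and
`M_Y ≤ 2(m + in)`. -/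
theorem stmt_17 (n m i : ℕ) (hn : 2 ≤ n)
    (t : ℕ → ℕ) (k : ℕ → ℕ → ℤ) (k0 : ℕ → ℤ)
    (hnew : ∀ j ∈ Finset.Icc (m + 1) (m + i * n),
      t j = 1 ∧ k0 j = 1 ∧ k j 1 = (n : ℤ)) :
    (∑ j ∈ Finset.Icc 1 (m + i * n),
        (1 - (n : ℝ) - 2 * (k0 j : ℝ) - (k0 j : ℝ) ^ 2 / (n : ℝ)
          + (∑ p ∈ Finset.Icc 1 (t j), (p : ℝ) ^ 2 * (k j p : ℝ))
          + 2 * (t j : ℝ)))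
      = (∑ j ∈ Finset.Icc 1 m,
        (1 - (n : ℝ) - 2 * (k0 j : ℝ) - (k0 j : ℝ) ^ 2 / (n : ℝ)
          + (∑ p ∈ Finset.Icc 1 (t j), (p : ℝ) ^ 2 * (k j p : ℝ))
          + 2 * (t j : ℝ)))
        + (i : ℝ) * ((n : ℝ) - 1) ∧
    ((∃ z : ℤ, (∑ j ∈ Finset.Icc 1 m,
        (1 - (n : ℝ) - 2 * (k0 j : ℝ) - (k0 j : ℝ) ^ 2 / (n : ℝ)
          + (∑ p ∈ Finset.Icc 1 (t j), (p : ℝ) ^ 2 * (k j p : ℝ))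
          + 2 * (t j : ℝ))) = 2 * (z : ℝ)) →
      0 < (∑ j ∈ Finset.Icc 1 m,
        (1 - (n : ℝ) - 2 * (k0 j : ℝ) - (k0 j : ℝ) ^ 2 / (n : ℝ)
          + (∑ p ∈ Finset.Icc 1 (t j), (p : ℝ) ^ 2 * (k j p : ℝ))
          + 2 * (t j : ℝ))) →
      (∑ j ∈ Finset.Icc 1 m,
        (1 - (n : ℝ) - 2 * (k0 j : ℝ) - (k0 j : ℝ) ^ 2 / (n : ℝ)
          + (∑ p ∈ Finset.Icc 1 (t j), (p : ℝ) ^ 2 * (k j p : ℝ))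
          + 2 * (t j : ℝ))) ≤ 2 * (m : ℝ) →
      (Even n → Even i) →
      (∃ z : ℤ, (∑ j ∈ Finset.Icc 1 (m + i * n),
        (1 - (n : ℝ) - 2 * (k0 j : ℝ) - (k0 j : ℝ) ^ 2 / (n : ℝ)
          + (∑ p ∈ Finset.Icc 1 (t j), (p : ℝ) ^ 2 * (k j p : ℝ))
          + 2 * (t j : ℝ))) = 2 * (z : ℝ)) ∧
      (∑ j ∈ Finset.Icc 1 (m + i * n),
        (1 - (n : ℝ) - 2 * (k0 j : ℝ) - (k0 j : ℝ) ^ 2 / (n : ℝ)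
          + (∑ p ∈ Finset.Icc 1 (t j), (p : ℝ) ^ 2 * (k j p : ℝ))
          + 2 * (t j : ℝ))) ≤ 2 * ((m : ℝ) + (i : ℝ) * (n : ℝ))) := by
  have hn0 : (n : ℝ) ≠ 0 := by
    have : (0:ℕ) < n := by omega
    exact_mod_cast this.ne'
  set f : ℕ → ℝ := fun j =>
    1 - (n : ℝ) - 2 * (k0 j : ℝ) - (k0 j : ℝ) ^ 2 / (n : ℝ)
      + (∑ p ∈ Finset.Icc 1 (t j), (p : ℝ) ^ 2 * (k j p : ℝ))
      + 2 * (t j : ℝ) with hf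
  have hsplit : (∑ j ∈ Finset.Ioc 0 m, f j) + (∑ j ∈ Finset.Ioc m (m + i * n), f j)
      = ∑ j ∈ Finset.Ioc 0 (m + i * n), f j :=
    Finset.sum_Ioc_consecutive _ (Nat.zero_le m) (Nat.le_add_right _ _)
  have hicc : ∀ N : ℕ, Finset.Icc 1 N = Finset.Ioc 0 N := by
    intro N; rfl
  have hval : ∀ j ∈ Finset.Ioc m (m + i * n), f j = 1 - 1 / (n : ℝ) := by
    intro j hj
    have hj' : j ∈ Finset.Icc (m + 1) (m + i * n) := by
      simp only [Finset.mem_Ioc] at hj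
      simp only [Finset.mem_Icc]; omega
    obtain ⟨ht, hk0, hk⟩ := hnew j hj'
    simp only [hf, ht, hk0]
    norm_num
    rw [hk]
    push_cast
    ring
  have hnewsum : (∑ j ∈ Finset.Ioc m (m + i * n), f j) = (i : ℝ) * ((n : ℝ) - 1) := by
    rw [Finset.sum_congr rfl hval, Finset.sum_const, Nat.card_Ioc]
    have : m + i * n - m = i * n := by omega
    rw [this]
    field_simp
    rw [nsmul_eq_mul, mul_div_assoc', div_eq_iff hn0]
    push_cast
    ring
  have key : (∑ j ∈ Finset.Icc 1 (m + i * n), f j)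
      = (∑ j ∈ Finset.Icc 1 m, f j) + (i : ℝ) * ((n : ℝ) - 1) := by
    rw [hicc, hicc, ← hsplit, hnewsum]
  refine ⟨key, fun ⟨z, hz⟩ hpos hle hpar => ?_⟩
  constructor
  · -- parity
    have heven : Even (i * (n - 1)) := by
      rcases Nat.even_or_odd n with he | ho
      · exact (hpar he).mul_right _
      · refine Even.mul_left ?_ _
        rcases ho with ⟨c, hc⟩
        exact ⟨c, by omega⟩
    obtain ⟨c, hc⟩ := heven
    refine ⟨z + c, ?_⟩
    rw [key, hz]
    have : (i : ℝ) * ((n : ℝ) - 1) = ((i * (n - 1) : ℕ) : ℝ) := by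
      push_cast [Nat.cast_sub (by omega : 1 ≤ n)]
      ring
    rw [this, hc]
    push_cast
    ring
  · rw [key]
    have h1 : (i : ℝ) * ((n : ℝ) - 1) ≤ 2 * ((i : ℝ) * (n : ℝ)) := by
      have hi : (0:ℝ) ≤ (i:ℝ) := Nat.cast_nonneg i
      have hn1 : (1:ℝ) ≤ (n:ℝ) := by exact_mod_cast (by omega : 1 ≤ n)
      nlinarith
    linarith
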